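/- arXiv:2303.00259 — 3 statements merged into one kernel-verified Lean document; each statement's English description precedes it below -/
import Mathlib

section
/- Fix d ≥ 1, ranges [l_i, h_i] with 0 ≤ l_i ≤ h_i for 1 ≤ i ≤ d−1, and points t, s ∈ R^d. Let h'(r) = Σ_{i=1}^{d−1} (s[i] − t[i])·r[i] + s[d] − t[d] for r in the box R = Π [l_i, h_i], and let h(ω) = Σ_{i=1}^{d} (s[i] − t[i])·ω[i] over the region Ω = {ω ∈ R^d : ω[d] > 0, Σ ω[i] = 1, l_i ≤ ω[i]/ω[d] ≤ h_i for i < d}. Then min over R of h' is ≥ 0 if and only if inf over Ω of h is ≥ 0. -/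
open Finset

/-- Key lemma: the box LP h' is nonnegative on the box iff the simplex LP h is
nonnegative on the weight-ratio constrained region (d = n + 1 dimensions). -/
theorem box_min_nonneg_iff_simplex_inf_nonneg (n : ℕ)
    (l h : Fin n → ℝ) (hl : ∀ i, 0 ≤ l i) (hlh : ∀ i, l i ≤ h i)
    (t s : Fin (n + 1) → ℝ) :
    (∀ r : Fin n → ℝ, (∀ i, l i ≤ r i ∧ r i ≤ h i) →
      0 ≤ (∑ i, (s i.castSucc - t i.castSucc) * r i) + (s (Fin.last n) - t (Fin.last n))) ↔
    (∀ ω : Fin (n + 1) → ℝ, (∀ i, 0 ≤ ω i) → (∑ i, ω i) = 1 →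
      0 < ω (Fin.last n) →
      (∀ i : Fin n, l i ≤ ω i.castSucc / ω (Fin.last n) ∧
        ω i.castSucc / ω (Fin.last n) ≤ h i) →
      0 ≤ ∑ i, (s i - t i) * ω i) := by
  constructor
  · intro H ω _ _ hpos hratio
    have key := H (fun i => ω i.castSucc / ω (Fin.last n)) hratio
    have expand : ∑ i, (s i - t i) * ω i =
        ω (Fin.last n) * ((∑ i : Fin n,
          (s i.castSucc - t i.castSucc) * (ω i.castSucc / ω (Fin.last n)))
          + (s (Fin.last n) - t (Fin.last n))) := by
      rw [Fin.sum_univ_castSucc, mul_add, Finset.mul_sum]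
      congr 1
      · apply Finset.sum_congr rfl
        intro i _
        field_simp
      · ring
    rw [expand]
    positivity
  · intro H r hr
    set S : ℝ := ∑ i, r i with hS
    have hrnn : ∀ i, 0 ≤ r i := fun i => (hl i).trans (hr i).1
    have hSnn : 0 ≤ S := Finset.sum_nonneg fun i _ => hrnn i
    have hS1 : 0 < S + 1 := by linarith
    set ω : Fin (n + 1) → ℝ := fun i =>
      Fin.lastCases (1 / (S + 1)) (fun j => r j / (S + 1)) i with hω
    have hωc : ∀ j : Fin n, ω j.castSucc = r j / (S + 1) := fun j => by
      simp [hω]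
    have hωl : ω (Fin.last n) = 1 / (S + 1) := by simp [hω]
    have hωnn : ∀ i, 0 ≤ ω i := by
      intro i
      induction i using Fin.lastCases with
      | last => rw [hωl]; positivity
      | cast j => rw [hωc]; exact div_nonneg (hrnn j) hS1.le
    have hωsum : (∑ i, ω i) = 1 := by
      rw [Fin.sum_univ_castSucc, hωl]
      have : ∑ i : Fin n, ω i.castSucc = S / (S + 1) := by
        rw [Finset.sum_congr rfl (fun i _ => hωc i), ← Finset.sum_div]
      rw [this]
      field_simp
    have hωpos : 0 < ω (Fin.last n) := by rw [hωl]; positivity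
    have hratio : ∀ j : Fin n, ω j.castSucc / ω (Fin.last n) = r j := by
      intro j
      rw [hωc, hωl]
      field_simp
    have key := H ω hωnn hωsum hωpos (fun i => by rw [hratio]; exact hr i)
    have expand : ∑ i, (s i - t i) * ω i =
        ((∑ i : Fin n, (s i.castSucc - t i.castSucc) * r i)
          + (s (Fin.last n) - t (Fin.last n))) / (S + 1) := by
      have hterm : ∀ i : Fin n, (s i.castSucc - t i.castSucc) * ω i.castSucc
          = (s i.castSucc - t i.castSucc) * r i / (S + 1) := fun i => by
        rw [hωc, mul_div_assoc]
      rw [Fin.sum_univ_castSucc, hωl, Finset.sum_congr rfl (fun i _ => hterm i),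
        ← Finset.sum_div, add_div]
      ring
    rw [expand] at key
    rwa [le_div_iff₀ hS1, zero_mul] at key
end

section
/- Let F = {S_ω : ω ∈ S^{d−1}, ω[d] > 0, l_i ≤ ω[i]/ω[d] ≤ h_i for 1 ≤ i < d} with 0 ≤ l_i ≤ h_i. Then t F-dominates s if and only if t[d] − s[d] ≤ Σ_{i=1}^{d−1} c_i·(s[i] − t[i]), where c_i = l_i if s[i] > t[i] and c_i = h_i otherwise. -/
open Finset

/-- Efficient F-dominance test under weight ratio constraints (Theorem 6):
t F-dominates s iff a single linear inequality with coefficients chosen from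
the range endpoints holds. -/
theorem efficient_fDominance_test (n : ℕ)
    (l h : Fin n → ℝ) (hl : ∀ i, 0 ≤ l i) (hlh : ∀ i, l i ≤ h i)
    (t s : Fin (n + 1) → ℝ) :
    (∀ ω : Fin (n + 1) → ℝ, (∀ i, 0 ≤ ω i) → (∑ i, ω i) = 1 →
      0 < ω (Fin.last n) →
      (∀ i : Fin n, l i ≤ ω i.castSucc / ω (Fin.last n) ∧
        ω i.castSucc / ω (Fin.last n) ≤ h i) →
      (∑ i, ω i * t i) ≤ ∑ i, ω i * s i) ↔
    t (Fin.last n) - s (Fin.last n) ≤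
      ∑ i, (if t i.castSucc < s i.castSucc then l i else h i) *
        (s i.castSucc - t i.castSucc) := by
  set c : Fin n → ℝ := fun i => if t i.castSucc < s i.castSucc then l i else h i
    with hcdef
  have hc0 : ∀ i, 0 ≤ c i := by
    intro i
    by_cases hi : t i.castSucc < s i.castSucc
    · simpa [hcdef, hi] using hl i
    · simpa [hcdef, hi] using (hl i).trans (hlh i)
  have hcl : ∀ i, l i ≤ c i := by
    intro i
    by_cases hi : t i.castSucc < s i.castSucc
    · simp [hcdef, hi]
    · simpa [hcdef, hi] using hlh i
  have hch : ∀ i, c i ≤ h i := by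
    intro i
    by_cases hi : t i.castSucc < s i.castSucc
    · simpa [hcdef, hi] using hlh i
    · simp [hcdef, hi]
  constructor
  · intro H
    have hsum0 : 0 ≤ ∑ i, c i := Finset.sum_nonneg fun i _ => hc0 i
    have hD : (0:ℝ) < 1 + ∑ i, c i := by linarith
    set D := 1 + ∑ i, c i with hDdef
    have hDne : D ≠ 0 := ne_of_gt hD
    set ω : Fin (n+1) → ℝ := fun j => Fin.lastCases (1/D) (fun i => c i / D) j
      with hωdef
    have hωc : ∀ i : Fin n, ω i.castSucc = c i / D := by
      intro i; simp [hωdef]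
    have hωl : ω (Fin.last n) = 1 / D := by simp [hωdef]
    have h1 : ∀ i, 0 ≤ ω i := by
      intro j
      refine Fin.lastCases ?_ ?_ j
      · rw [hωl]; positivity
      · intro i; rw [hωc]; exact div_nonneg (hc0 i) (le_of_lt hD)
    have h2 : ∑ i, ω i = 1 := by
      rw [Fin.sum_univ_castSucc]
      simp only [hωc, hωl]
      rw [← Finset.sum_div]
      field_simp
      linarith
    have h3 : 0 < ω (Fin.last n) := by rw [hωl]; positivity
    have h4 : ∀ i : Fin n, l i ≤ ω i.castSucc / ω (Fin.last n) ∧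
        ω i.castSucc / ω (Fin.last n) ≤ h i := by
      intro i
      rw [hωc, hωl]
      have hr : c i / D / (1/D) = c i := by field_simp
      rw [hr]
      exact ⟨hcl i, hch i⟩
    have key := H ω h1 h2 h3 h4
    rw [Fin.sum_univ_castSucc, Fin.sum_univ_castSucc] at key
    simp only [hωc, hωl] at key
    have e1 : ∑ i, c i / D * t i.castSucc = (∑ i, c i * t i.castSucc) / D := by
      rw [Finset.sum_div]; exact Finset.sum_congr rfl fun i _ => by ring
    have e2 : ∑ i, c i / D * s i.castSucc = (∑ i, c i * s i.castSucc) / D := by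
      rw [Finset.sum_div]; exact Finset.sum_congr rfl fun i _ => by ring
    rw [e1, e2] at key
    have key2 : ∑ i, c i * t i.castSucc + t (Fin.last n) ≤
        ∑ i, c i * s i.castSucc + s (Fin.last n) := by
      have := mul_le_mul_of_nonneg_left key (le_of_lt hD)
      field_simp at this
      linarith
    have e3 : ∑ i, c i * (s i.castSucc - t i.castSucc) =
        ∑ i, c i * s i.castSucc - ∑ i, c i * t i.castSucc := by
      rw [← Finset.sum_sub_distrib]
      exact Finset.sum_congr rfl fun i _ => by ring
    rw [e3]
    linarith
  · intro H ω h1 h2 h3 h4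
    have hne : ω (Fin.last n) ≠ 0 := ne_of_gt h3
    have step : ∀ i : Fin n,
        ω (Fin.last n) * (c i * (s i.castSucc - t i.castSucc)) ≤
        ω i.castSucc * (s i.castSucc - t i.castSucc) := by
      intro i
      obtain ⟨hli, hhi⟩ := h4 i
      have hω' : ω i.castSucc = (ω i.castSucc / ω (Fin.last n)) * ω (Fin.last n) := by
        field_simp
      rw [hω']
      set r := ω i.castSucc / ω (Fin.last n) with hrdef
      by_cases hi : t i.castSucc < s i.castSucc
      · have hc : c i = l i := if_pos hi
        rw [hc]
        have hd : 0 ≤ s i.castSucc - t i.castSucc := by linarith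
        nlinarith [mul_nonneg h3.le (mul_nonneg (sub_nonneg.2 hli) hd)]
      · have hc : c i = h i := if_neg hi
        rw [hc]
        have hd : s i.castSucc - t i.castSucc ≤ 0 := by
          push_neg at hi; linarith
        nlinarith [mul_nonneg h3.le (mul_nonneg (sub_nonneg.2 hhi) (neg_nonneg.2 hd))]
    have sum_step : ω (Fin.last n) * ∑ i : Fin n, c i * (s i.castSucc - t i.castSucc) ≤
        ∑ i : Fin n, ω i.castSucc * (s i.castSucc - t i.castSucc) := by
      rw [Finset.mul_sum]
      exact Finset.sum_le_sum fun i _ => step i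
    have hmul : ω (Fin.last n) * (t (Fin.last n) - s (Fin.last n)) ≤
        ω (Fin.last n) * ∑ i, c i * (s i.castSucc - t i.castSucc) :=
      mul_le_mul_of_nonneg_left H (le_of_lt h3)
    have e4 : ∑ i : Fin n, ω i.castSucc * (s i.castSucc - t i.castSucc) =
        ∑ i : Fin n, ω i.castSucc * s i.castSucc - ∑ i : Fin n, ω i.castSucc * t i.castSucc := by
      rw [← Finset.sum_sub_distrib]
      exact Finset.sum_congr rfl fun i _ => by ring
    rw [e4] at sum_step
    rw [Fin.sum_univ_castSucc, Fin.sum_univ_castSucc]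
    linarith [hmul.trans sum_step]
end

section
/- Let T_1, ..., T_m be disjoint finite sets of instances with probabilities as above, and let ≺ be a transitive, irreflexive, asymmetric dominance relation. Define Pr_rsky(t) = p(t)·Π_{j≠i}(1 − Σ_{s∈T_j, s≺t} p(s)) for t ∈ T_i, where p(t) > 0 for all instances. If t ∈ T_i satisfies Pr_rsky(t) = 0 and s ∈ T_j (j ≠ i) satisfies t ≺ s, then Pr_rsky(s) = 0. -/
open Finset
open scoped Classical

/-- Instances with zero rskyline probability can be safely discarded:
zero rskyline probability propagates along the dominance relation to
instances of other objects. -/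
theorem zero_rskyline_prob_propagates (m : ℕ) (ι : Type) [Fintype ι]
    (obj : ι → Fin m) (p : ι → ℝ)
    (hp : ∀ x, 0 < p x ∧ p x ≤ 1)
    (hsum : ∀ j : Fin m, (∑ x ∈ univ.filter (fun x => obj x = j), p x) ≤ 1)
    (prec : ι → ι → Prop)
    (htrans : ∀ a b c, prec a b → prec b c → prec a c)
    (hirr : ∀ a, ¬ prec a a)
    (hasym : ∀ a b, prec a b → ¬ prec b a)
    (Prrsky : ι → ℝ)
    (hPr : ∀ x, Prrsky x = p x * ∏ j ∈ univ.erase (obj x),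
        (1 - ∑ s ∈ univ.filter (fun s => obj s = j ∧ prec s x), p s))
    (t s : ι) (hne : obj s ≠ obj t) (hts : prec t s) (h0 : Prrsky t = 0) :
    Prrsky s = 0 := by
  rw [hPr t] at h0
  have hpt : p t ≠ 0 := ne_of_gt (hp t).1
  have hprod0 : (∏ j ∈ univ.erase (obj t),
      (1 - ∑ u ∈ univ.filter (fun u => obj u = j ∧ prec u t), p u)) = 0 := by
    rcases mul_eq_zero.mp h0 with h | h
    · exact absurd h hpt
    · exact h
  obtain ⟨j, hj, hjz⟩ := prod_eq_zero_iff.mp hprod0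
  have hsum1 : (∑ u ∈ univ.filter (fun u => obj u = j ∧ prec u t), p u) = 1 := by
    linarith [hjz]
  -- j ≠ obj s
  have hjs : j ≠ obj s := by
    intro hje
    -- show s ∈ the filter, i.e. prec s t
    have hsub : univ.filter (fun u => obj u = j ∧ prec u t) ⊆
        univ.filter (fun u => obj u = j) := by
      intro u hu
      simp only [mem_filter] at hu ⊢
      exact ⟨hu.1, hu.2.1⟩
    by_cases hsmem : s ∈ univ.filter (fun u => obj u = j ∧ prec u t)
    · simp only [mem_filter] at hsmem
      exact hasym t s hts hsmem.2.2
    · have hsub' : univ.filter (fun u => obj u = j ∧ prec u t) ⊆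
          (univ.filter (fun u => obj u = j)).erase s := by
        intro u hu
        exact mem_erase.mpr ⟨fun h => hsmem (h ▸ hu), hsub hu⟩
      have hle : (∑ u ∈ univ.filter (fun u => obj u = j ∧ prec u t), p u) ≤
          ∑ u ∈ (univ.filter (fun u => obj u = j)).erase s, p u :=
        sum_le_sum_of_subset_of_nonneg hsub' (fun i _ _ => le_of_lt (hp i).1)
      have hsmem' : s ∈ univ.filter (fun u => obj u = j) := by
        simp [hje.symm]
      have heq : (∑ u ∈ (univ.filter (fun u => obj u = j)).erase s, p u)
          = (∑ u ∈ univ.filter (fun u => obj u = j), p u) - p s := by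
        rw [eq_sub_iff_add_eq, Finset.sum_erase_add _ _ hsmem']
      have := hsum j
      have := (hp s).1
      linarith
  -- the j-factor in the product for s is zero
  have hsub2 : univ.filter (fun u => obj u = j ∧ prec u t) ⊆
      univ.filter (fun u => obj u = j ∧ prec u s) := by
    intro u hu
    simp only [mem_filter] at hu ⊢
    exact ⟨hu.1, hu.2.1, htrans u t s hu.2.2 hts⟩
  have hge : (1:ℝ) ≤ ∑ u ∈ univ.filter (fun u => obj u = j ∧ prec u s), p u := by
    rw [← hsum1]
    exact sum_le_sum_of_subset_of_nonneg hsub2 (fun i _ _ => le_of_lt (hp i).1)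
  have hle2 : (∑ u ∈ univ.filter (fun u => obj u = j ∧ prec u s), p u) ≤ 1 := by
    refine le_trans (sum_le_sum_of_subset_of_nonneg ?_ (fun i _ _ => le_of_lt (hp i).1)) (hsum j)
    intro u hu
    simp only [mem_filter] at hu ⊢
    exact ⟨mem_univ u, hu.2.1⟩
  have hfac : (1 - ∑ u ∈ univ.filter (fun u => obj u = j ∧ prec u s), p u) = 0 := by
    linarith
  rw [hPr s]
  have hjmem : j ∈ univ.erase (obj s) := mem_erase.mpr ⟨hjs, mem_univ j⟩
  rw [prod_eq_zero hjmem hfac, mul_zero]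
end
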